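/- arXiv:2103.14649 — 5 statements merged into one kernel-verified Lean document; each statement's English description precedes it below -/
import Mathlib

section
/- Let μ be the product probability measure on Ω = ℕ → Bool whose coordinates are independent fair coin flips (each coordinate uniform on Bool), and let v : Ω → ℕ → Bool be predictable. Then for every round index k ∈ ℕ, the probability that the round-k coin equals its target is exactly one half: μ {ω | ω k = v ω k} = 1/2. -/
open MeasureTheory

/-- `μ` is the product probability measure on `Ω = ℕ → Bool` whose coordinates are
independent fair coin flips: every cylinder event fixing the coins on a finite set `s`
of rounds has probability `(1/2)^|s|`.  (Taking `s = ∅` shows `μ` is a probability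
measure, and these cylinder probabilities uniquely determine the product measure.) -/
def IsFairCoinSeq (μ : Measure (ℕ → Bool)) : Prop :=
  ∀ (s : Finset ℕ) (f : ℕ → Bool),
    μ {ω | ∀ k ∈ s, ω k = f k} = (1 / 2 : ENNReal) ^ s.card

/-- `v` is predictable: the round-`k` target depends only on the coins of earlier
rounds. -/
def Predictable (v : (ℕ → Bool) → ℕ → Bool) : Prop :=
  ∀ ω ω' k, (∀ j < k, ω j = ω' j) → v ω k = v ω' k

/-- For every round `k`, the probability that the round-`k` coin equals its
predictable target is exactly one half. -/
theorem coin_matches_target_prob_half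
    (μ : Measure (ℕ → Bool)) (hμ : IsFairCoinSeq μ)
    (v : (ℕ → Bool) → ℕ → Bool) (hv : Predictable v) (k : ℕ) :
    μ {ω | ω k = v ω k} = 1 / 2 := by
  classical
  set ext : (Fin k → Bool) → ℕ → Bool :=
    fun g j => if h : j < k then g ⟨j, h⟩ else false with hext
  set F : (Fin k → Bool) → ℕ → Bool :=
    fun g j => if j = k then v (ext g) k else ext g j with hF
  set A : (Fin k → Bool) → Set (ℕ → Bool) :=
    fun g => {ω | ∀ j ∈ Finset.range (k+1), ω j = F g j} with hA
  have hmeas : ∀ g, MeasurableSet (A g) := by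
    intro g
    have h1 : A g = ⋂ j ∈ Finset.range (k+1), {ω : ℕ → Bool | ω j = F g j} := by
      ext ω; simp [hA]
    rw [h1]
    refine MeasurableSet.biInter (Finset.range (k+1)).countable_toSet fun j _ => ?_
    have h2 : {ω : ℕ → Bool | ω j = F g j} = (fun ω : ℕ → Bool => ω j) ⁻¹' {F g j} := rfl
    rw [h2]
    exact (measurable_pi_apply j) (measurableSet_singleton (F g j))
  have hμA : ∀ g, μ (A g) = (1/2 : ENNReal) ^ (k+1) := by
    intro g
    have := hμ (Finset.range (k+1)) (F g)
    rw [hA]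
    simpa using this
  have hunion : {ω : ℕ → Bool | ω k = v ω k} = ⋃ g : (Fin k → Bool), A g := by
    ext ω
    simp only [Set.mem_setOf_eq, Set.mem_iUnion]
    constructor
    · intro h
      refine ⟨fun i => ω i, fun j hj => ?_⟩
      simp only [Finset.mem_range] at hj
      have hagree : ∀ i < k, ω i = ext (fun i : Fin k => ω i) i := by
        intro i hi; simp [hext, hi]
      by_cases hjk : j = k
      · rw [hjk]
        simp only [hF, if_pos rfl]
        rw [h]
        exact hv ω _ k hagree
      · have hjlt : j < k := lt_of_le_of_ne (Nat.lt_succ_iff.mp hj) hjk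
        simp [hF, hjk, hext, hjlt]
    · rintro ⟨g, hg⟩
      have hk' : ω k = v (ext g) k := by
        have := hg k (Finset.mem_range.mpr (Nat.lt_succ_self k))
        simpa [hF] using this
      have hagree : ∀ i < k, ext g i = ω i := by
        intro i hi
        have := hg i (Finset.mem_range.mpr (Nat.lt_succ_of_lt hi))
        simp only [hF, if_neg (Nat.ne_of_lt hi)] at this
        exact this.symm
      rw [hk', hv (ext g) ω k hagree]
  have hdisj : Pairwise (Function.onFun Disjoint A) := by
    intro g g' hne
    rw [Function.onFun, Set.disjoint_left]
    intro ω hg hg'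
    apply hne
    funext i
    have h1 := hg i (Finset.mem_range.mpr (Nat.lt_succ_of_lt i.2))
    have h2 := hg' i (Finset.mem_range.mpr (Nat.lt_succ_of_lt i.2))
    have hne' : (i : ℕ) ≠ k := Nat.ne_of_lt i.2
    simp only [hF, if_neg hne', hext, dif_pos i.2, Fin.eta] at h1 h2
    rw [← h1, ← h2]
  rw [hunion, measure_iUnion hdisj hmeas, tsum_fintype]
  simp only [hμA, Finset.sum_const, Finset.card_univ, Fintype.card_fun,
    Fintype.card_bool, Fintype.card_fin, nsmul_eq_mul]
  push_cast
  rw [one_div, pow_succ, ← mul_assoc, ← mul_pow,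
    ENNReal.mul_inv_cancel two_ne_zero (by norm_num), one_pow, one_mul]
end

section
/- Let μ be the product probability measure on Ω = ℕ → Bool whose coordinates are independent fair coin flips, and let v : Ω → ℕ → Bool be predictable. Then for every r ∈ ℕ, the probability that some coin among the first r rounds equals its target is μ {ω | ∃ k < r, ω k = v ω k} = 1 − (1/2)^r. (This is the paper's Claim that, with probability Pr(r) = 1 − (1/2)^r, by the end of round r all correct processors hold the same estimate and decide.) -/
open MeasureTheory

/-- The unique sequence that misses the target at every round. -/
def missSeq (v : (ℕ → Bool) → ℕ → Bool) : ℕ → Bool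
  | k => !v (fun j => if h : j < k then missSeq v j else false) k
  termination_by k => k
  decreasing_by exact h

lemma missSeq_eq (v : (ℕ → Bool) → ℕ → Bool) (hv : Predictable v)
    (ω : ℕ → Bool) (k : ℕ) (h : ∀ j < k, ω j = missSeq v j) :
    missSeq v k = !v ω k := by
  rw [missSeq]
  congr 1
  exact (hv ω _ k (fun j hj => by simp [hj, h j hj])).symm

/-- The probability that some coin among the first `r` rounds equals its predictable
target is `1 - (1/2)^r`. -/
theorem some_coin_matches_by_round_r
    (μ : Measure (ℕ → Bool)) (hμ : IsFairCoinSeq μ)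
    (v : (ℕ → Bool) → ℕ → Bool) (hv : Predictable v) (r : ℕ) :
    μ {ω | ∃ k < r, ω k = v ω k} = 1 - (1 / 2 : ENNReal) ^ r := by
  set C : Set (ℕ → Bool) := {ω | ∀ k ∈ Finset.range r, ω k = missSeq v k} with hC
  have hCeq : {ω : ℕ → Bool | ∃ k < r, ω k = v ω k} = Cᶜ := by
    ext ω
    simp only [Set.mem_setOf_eq, Set.mem_compl_iff, hC, Finset.mem_range]
    constructor
    · rintro ⟨k, hk, hmatch⟩ hall
      have := missSeq_eq v hv ω k (fun j hj => hall j (hj.trans hk))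
      have h2 := hall k hk
      rw [this, hmatch] at h2
      simp at h2
    · intro hC
      by_contra hno
      push_neg at hno
      apply hC
      intro k hk
      induction k using Nat.strong_induction_on with
      | _ k ih =>
        have hagree : ∀ j < k, ω j = missSeq v j := fun j hj => ih j hj (hj.trans hk)
        rw [missSeq_eq v hv ω k hagree]
        have := hno k hk
        cases hωk : ω k <;> cases hvk : v ω k <;> simp_all
  have hCmeas : MeasurableSet C := by
    have : C = ⋂ k ∈ Finset.range r, {ω : ℕ → Bool | ω k = missSeq v k} := by
      ext ω; simp [hC]
    rw [this]
    exact MeasurableSet.biInter (Finset.range r).countable_toSet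
      (fun k _ => measurableSet_eq_fun (measurable_pi_apply k) measurable_const)
  have hμC : μ C = (1 / 2 : ENNReal) ^ r := by
    have := hμ (Finset.range r) (missSeq v)
    rwa [Finset.card_range] at this
  have hμuniv : μ Set.univ = 1 := by
    have := hμ ∅ (fun _ => false)
    simpa using this
  rw [hCeq, measure_compl hCmeas (by rw [hμC]; exact (ENNReal.pow_lt_top (by norm_num)).ne),
    hμuniv, hμC]
end

section
/- Let μ be the product probability measure on Ω = ℕ → Bool whose coordinates are independent fair coin flips, and let v : Ω → ℕ → Bool be predictable. Then for every M ∈ ℕ, the probability that no coin among the first M rounds equals its target is μ {ω | ∀ k < M, ω k ≠ v ω k} = (1/2)^M. (This is the probability with which the algorithm, run for a predefined bound of M rounds, fails to decide and may violate the safety requirements; it is exponentially small in M.) -/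
open MeasureTheory

/-- The unique coin sequence avoiding the predictable target at every round. -/
def avoidFn (v : (ℕ → Bool) → ℕ → Bool) : ℕ → Bool
  | k => ! v (fun j => if h : j < k then avoidFn v j else false) k
  decreasing_by exact h

lemma avoid_spec (v : (ℕ → Bool) → ℕ → Bool) (hv : Predictable v)
    (ω : ℕ → Bool) (k : ℕ) (hk : ∀ j < k, ω j = avoidFn v j) :
    (ω k ≠ v ω k) ↔ ω k = avoidFn v k := by
  have hveq : v ω k = v (fun j => if h : j < k then avoidFn v j else false) k := by
    apply hv
    intro j hj
    simp [hj, hk j hj]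
  rw [avoidFn, ← hveq]
  cases h : ω k <;> cases h2 : v ω k <;> simp

/-- The probability that no coin among the first `M` rounds equals its predictable
target is `(1/2)^M`. -/
theorem no_coin_matches_within_M_rounds
    (μ : Measure (ℕ → Bool)) (hμ : IsFairCoinSeq μ)
    (v : (ℕ → Bool) → ℕ → Bool) (hv : Predictable v) (M : ℕ) :
    μ {ω | ∀ k < M, ω k ≠ v ω k} = (1 / 2 : ENNReal) ^ M := by
  have hset : {ω : ℕ → Bool | ∀ k < M, ω k ≠ v ω k}
      = {ω | ∀ k ∈ Finset.range M, ω k = avoidFn v k} := by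
    ext ω
    simp only [Set.mem_setOf_eq, Finset.mem_range]
    constructor
    · intro h k hk
      induction k using Nat.strong_induction_on with
      | _ k ih =>
        exact (avoid_spec v hv ω k (fun j hj => ih j hj (lt_trans hj hk))).mp (h k hk)
    · intro h k hk
      exact (avoid_spec v hv ω k (fun j hj => h j (lt_trans hj hk))).mpr (h k hk)
  rw [hset, hμ (Finset.range M) (avoidFn v), Finset.card_range]
end

section
/- Let μ be the product probability measure on Ω = ℕ → Bool whose coordinates are independent fair coin flips, and let v : Ω → ℕ → Bool be predictable. Then almost surely some coin eventually equals its target: μ {ω | ∃ k, ω k = v ω k} = 1. (This is the paper's statement that the MMR algorithm satisfies BC-termination with probability 1, i.e., lim_{r→∞} Pr[decision by round r] = 1.) -/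
open MeasureTheory

/-- Auxiliary: the "always-miss" trajectory, built prefix by prefix. -/
def pre (v : (ℕ → Bool) → ℕ → Bool) : ℕ → ℕ → Bool
  | 0 => fun _ => false
  | (k+1) => Function.update (pre v k) k (! v (pre v k) k)

lemma pre_stable (v : (ℕ → Bool) → ℕ → Bool) :
    ∀ k j, j < k → pre v k j = pre v (j+1) j := by
  intro k
  induction k with
  | zero => intro j hj; omega
  | succ k ih =>
    intro j hj
    rcases Nat.lt_succ_iff_lt_or_eq.mp hj with h | h
    · rw [show pre v (k+1) j = pre v k j from Function.update_of_ne (by omega) _ _]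
      exact ih j h
    · subst h; rfl

lemma miss_determined (v : (ℕ → Bool) → ℕ → Bool) (hv : Predictable v)
    (ω : ℕ → Bool) (hω : ∀ k, ω k ≠ v ω k) :
    ∀ k, ω k = pre v (k+1) k := by
  intro k
  induction k using Nat.strong_induction_on with
  | _ k ih =>
    have hag : ∀ j < k, ω j = pre v k j := by
      intro j hj
      rw [pre_stable v k j hj]; exact ih j hj
    have hvk : v ω k = v (pre v k) k := hv ω (pre v k) k hag
    have h1 : ω k = ! v ω k := by
      have := hω k
      cases h : v ω k <;> simp [h] at this ⊢ <;> simp [this]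
    have h2 : pre v (k+1) k = ! v (pre v k) k := Function.update_self _ _ _
    rw [h1, hvk, h2]

/-- Almost surely, some coin eventually equals its predictable target. -/
theorem eventually_coin_matches_target
    (μ : Measure (ℕ → Bool)) (hμ : IsFairCoinSeq μ)
    (v : (ℕ → Bool) → ℕ → Bool) (hv : Predictable v) :
    μ {ω | ∃ k, ω k = v ω k} = 1 := by
  have huniv : μ Set.univ = 1 := by
    have := hμ ∅ (fun _ => false)
    simpa using this
  set S := {ω : ℕ → Bool | ∃ k, ω k = v ω k}
  have hcompl : μ Sᶜ = 0 := by
    have hbound : ∀ n : ℕ, μ Sᶜ ≤ (1 / 2 : ENNReal) ^ n := by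
      intro n
      have hsub : Sᶜ ⊆ {ω | ∀ k ∈ Finset.range n, ω k = (fun j => pre v (j+1) j) k} := by
        intro ω hω k hk
        have hω' : ∀ k, ω k ≠ v ω k := by
          simpa [S, Set.mem_compl_iff, not_exists] using hω
        exact miss_determined v hv ω hω' k
      calc μ Sᶜ ≤ μ {ω | ∀ k ∈ Finset.range n, ω k = (fun j => pre v (j+1) j) k} :=
            measure_mono hsub
        _ = (1 / 2 : ENNReal) ^ (Finset.range n).card := hμ _ _
        _ = (1 / 2 : ENNReal) ^ n := by rw [Finset.card_range]
    have htend : Filter.Tendsto (fun n : ℕ => (1 / 2 : ENNReal) ^ n)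
        Filter.atTop (nhds 0) :=
      ENNReal.tendsto_pow_atTop_nhds_zero_of_lt_one (by norm_num)
    have := ge_of_tendsto' htend hbound
    exact le_antisymm this zero_le
  have h1 : (1 : ENNReal) ≤ μ S := by
    calc (1 : ENNReal) = μ Set.univ := huniv.symm
      _ = μ (S ∪ Sᶜ) := by rw [Set.union_compl_self]
      _ ≤ μ S + μ Sᶜ := measure_union_le _ _
      _ = μ S := by rw [hcompl, add_zero]
  exact le_antisymm (huniv ▸ measure_mono (Set.subset_univ _)) h1
end

section
/- Let μ be the product probability measure on Ω = ℕ → Bool whose coordinates are independent fair coin flips, and let v : Ω → ℕ → Bool be predictable. Define the random round number of the first match, T ω = 1 + inf {k ∈ ℕ | ω k = v ω k} (rounds numbered starting from 1). Then T is μ-almost everywhere finite and its expectation is ∫ T dμ = 2. (This is the expectation of the stage in which the processors' common estimate coincides with the common coin, Stage II in the paper's expected-termination analysis.) -/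
open MeasureTheory

/-- The round number (rounds counted from `1`) of the first round whose coin equals
its target. -/
noncomputable def firstMatchRound (v : (ℕ → Bool) → ℕ → Bool) (ω : ℕ → Bool) : ℕ :=
  1 + sInf {k : ℕ | ω k = v ω k}

def badSeq (v : (ℕ → Bool) → ℕ → Bool) : ℕ → Bool
  | k => ! v (fun j => if h : j < k then badSeq v j else false) k
  termination_by k => k
  decreasing_by exact h

theorem v_badSeq_prefix {v : (ℕ → Bool) → ℕ → Bool} (hv : Predictable v)
    (ω : ℕ → Bool) (k : ℕ) (h : ∀ j < k, ω j = badSeq v j) :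
    v ω k = ! badSeq v k := by
  have h1 : v ω k = v (fun j => if h : j < k then badSeq v j else false) k :=
    hv _ _ k (fun j hj => by simp [hj, h j hj])
  rw [h1]
  conv_rhs => rw [badSeq]
  rw [Bool.not_not]

theorem prefix_iff {v : (ℕ → Bool) → ℕ → Bool} (hv : Predictable v)
    (k : ℕ) (ω : ℕ → Bool) :
    (∀ j < k, ω j ≠ v ω j) ↔ (∀ j < k, ω j = badSeq v j) := by
  induction k with
  | zero => simp
  | succ k ih =>
    constructor
    · intro h
      have hpre : ∀ j < k, ω j = badSeq v j :=
        ih.mp (fun j hj => h j (Nat.lt_succ_of_lt hj))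
      intro j hj
      rcases Nat.lt_succ_iff_lt_or_eq.mp hj with hj' | rfl
      · exact hpre j hj'
      · have hk := h j (Nat.lt_succ_self j)
        have hvk := v_badSeq_prefix hv ω j hpre
        rw [hvk] at hk
        revert hk; cases ω j <;> cases badSeq v j <;> simp
    · intro h
      have hpre : ∀ j < k, ω j = badSeq v j := fun j hj => h j (Nat.lt_succ_of_lt hj)
      intro j hj
      rcases Nat.lt_succ_iff_lt_or_eq.mp hj with hj' | rfl
      · exact (ih.mpr hpre) j hj'
      · have hvk := v_badSeq_prefix hv ω j hpre
        rw [hvk, h j (Nat.lt_succ_self j)]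
        cases badSeq v j <;> simp

/-- The round of the first match is almost surely finite (a matching round almost
surely exists) and its expectation is `2`. -/
theorem firstMatchRound_ae_finite_and_expectation_two
    (μ : Measure (ℕ → Bool)) (hμ : IsFairCoinSeq μ)
    (v : (ℕ → Bool) → ℕ → Bool) (hv : Predictable v) :
    (∀ᵐ ω ∂μ, ∃ k, ω k = v ω k) ∧
      ∫ ω, (firstMatchRound v ω : ℝ) ∂μ = 2 := by
  classical
  have hprob : IsProbabilityMeasure μ := ⟨by simpa using hμ ∅ (fun _ => false)⟩
  set A : ℕ → Set (ℕ → Bool) := fun k => {ω | ∀ j < k, ω j = badSeq v j} with hA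
  have hAmeas : ∀ k, MeasurableSet (A k) := by
    intro k
    have : A k = ⋂ j ∈ Finset.range k, {ω : ℕ → Bool | ω j = badSeq v j} := by
      ext ω; simp [hA, Finset.mem_range]
    rw [this]
    exact MeasurableSet.biInter (Finset.range k).countable_toSet
      (fun j _ => (measurable_pi_apply j) (measurableSet_singleton _))
  have hAmu : ∀ k, μ (A k) = (1 / 2 : ENNReal) ^ k := by
    intro k
    have h := hμ (Finset.range k) (badSeq v)
    simpa [hA, Finset.mem_range, Finset.card_range] using h
  have hE0 : μ (⋂ k, A k) = 0 := by
    have hle : ∀ k, μ (⋂ k, A k) ≤ (1 / 2 : ENNReal) ^ k := fun k =>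
      (measure_mono (Set.iInter_subset _ k)).trans_eq (hAmu k)
    refine le_antisymm ?_ zero_le
    refine ge_of_tendsto' (ENNReal.tendsto_pow_atTop_nhds_zero_of_lt_one ?_) hle
    rw [ENNReal.div_lt_iff] <;> simp
  have hiff : ∀ ω, (¬ ∃ j, ω j = v ω j) ↔ ω ∈ ⋂ k, A k := by
    intro ω
    simp only [Set.mem_iInter, hA, Set.mem_setOf_eq]
    push_neg
    constructor
    · intro h k; exact (prefix_iff hv k ω).mp (fun j _ => h j)
    · intro h j
      exact ((prefix_iff hv (j + 1) ω).mpr (h (j + 1)) j (Nat.lt_succ_self j))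
  have hae : ∀ᵐ ω ∂μ, ∃ k, ω k = v ω k := by
    rw [ae_iff]
    have : {ω : ℕ → Bool | ¬ ∃ k, ω k = v ω k} = ⋂ k, A k := Set.ext fun ω => hiff ω
    rw [this]; exact hE0
  refine ⟨hae, ?_⟩
  set N : (ℕ → Bool) → ℕ := fun ω => sInf {k | ω k = v ω k} with hNdef
  have hN_ge : ∀ ω k, ω ∉ ⋂ j, A j → (k ≤ N ω ↔ ω ∈ A k) := by
    intro ω k hω
    have hS : {j | ω j = v ω j}.Nonempty := by
      by_contra h
      exact hω ((hiff ω).mp (by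
        intro hex
        exact h ⟨hex.choose, hex.choose_spec⟩))
    constructor
    · intro hk
      refine (prefix_iff hv k ω).mp ?_
      intro j hj heq
      have : sInf {k | ω k = v ω k} ≤ j := Nat.sInf_le heq
      have hNω : N ω = sInf {k | ω k = v ω k} := rfl
      omega
    · intro hk
      by_contra h
      push_neg at h
      have hmem := Nat.sInf_mem hS
      exact ((prefix_iff hv k ω).mpr hk) (sInf {j | ω j = v ω j}) h hmem
  have hlev : ∀ k : ℕ, {ω | k + 1 ≤ N ω} = A (k + 1) \ ⋂ j, A j := by
    intro k
    ext ω
    constructor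
    · intro h
      have hω : ω ∉ ⋂ j, A j := by
        intro hmem
        have hne := (hiff ω).mpr hmem
        push_neg at hne
        have : {j | ω j = v ω j} = ∅ := by
          ext j; simp [hne j]
        have hN0 : N ω = 0 := by rw [hNdef]; simp only; rw [this]; exact Nat.sInf_empty
        have h' : k + 1 ≤ N ω := h
        omega
      exact ⟨(hN_ge ω (k + 1) hω).mp h, hω⟩
    · rintro ⟨h1, h2⟩
      exact (hN_ge ω (k + 1) h2).mpr h1
  have hlevmeas : ∀ k : ℕ, MeasurableSet {ω | k + 1 ≤ N ω} := fun k => by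
    rw [hlev k]; exact (hAmeas (k + 1)).diff (MeasurableSet.iInter hAmeas)
  have hlevmu : ∀ k : ℕ, μ {ω | k + 1 ≤ N ω} = (1 / 2 : ENNReal) ^ (k + 1) := by
    intro k
    rw [hlev k, measure_diff_null hE0, hAmu]
  have hNmeas : Measurable N := by
    apply measurable_to_countable'
    intro n
    match n with
    | 0 =>
      have : N ⁻¹' {0} = {ω | 0 + 1 ≤ N ω}ᶜ := by
        ext ω
        simp only [Set.mem_preimage, Set.mem_singleton_iff, Set.mem_compl_iff,
          Set.mem_setOf_eq]
        omega
      rw [this]; exact (hlevmeas 0).compl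
    | n + 1 =>
      have : N ⁻¹' {n + 1} = {ω | n + 1 ≤ N ω} \ {ω | (n + 1) + 1 ≤ N ω} := by
        ext ω
        simp only [Set.mem_preimage, Set.mem_singleton_iff, Set.mem_diff,
          Set.mem_setOf_eq]
        omega
      rw [this]; exact (hlevmeas n).diff (hlevmeas (n + 1))
  have hTmeas : Measurable fun ω => (firstMatchRound v ω : ℝ) := by
    have : Measurable (firstMatchRound v) := by
      have : firstMatchRound v = fun ω => 1 + N ω := rfl
      rw [this]; exact measurable_const.add hNmeas
    exact Measurable.comp (measurable_from_top) this
  rw [integral_eq_lintegral_of_nonneg_ae (ae_of_all _ fun ω => by positivity)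
    hTmeas.aestronglyMeasurable]
  have hcast : ∀ ω, ENNReal.ofReal ((firstMatchRound v ω : ℝ)) =
      ((firstMatchRound v ω : ℕ) : ENNReal) := fun ω => ENNReal.ofReal_natCast _
  have hlin : ∫⁻ ω, ((firstMatchRound v ω : ℕ) : ENNReal) ∂μ = 2 := by
    have hsplit : ∀ ω, ((firstMatchRound v ω : ℕ) : ENNReal) = 1 + (N ω : ENNReal) := by
      intro ω
      have : firstMatchRound v ω = 1 + N ω := rfl
      rw [this]; push_cast; ring
    simp_rw [hsplit]
    rw [lintegral_add_left measurable_const]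
    have hNcast : ∀ ω, ((N ω : ℕ) : ENNReal) =
        ∑' k : ℕ, ({ω' | k + 1 ≤ N ω'}.indicator (fun _ => (1 : ENNReal)) ω) := by
      intro ω
      rw [tsum_eq_sum (s := Finset.range (N ω)) (fun k hk => by
        simp only [Finset.mem_range, not_lt] at hk
        simp [Set.indicator_apply]
        omega)]
      have : ∀ k ∈ Finset.range (N ω),
          ({ω' | k + 1 ≤ N ω'}.indicator (fun _ => (1 : ENNReal)) ω) = 1 := by
        intro k hk
        simp only [Finset.mem_range] at hk
        simp [Set.indicator_apply]
        omega
      rw [Finset.sum_congr rfl this]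
      simp
    simp_rw [hNcast]
    rw [lintegral_tsum (fun k => ((measurable_const.indicator (hlevmeas k))).aemeasurable)]
    have : ∀ k : ℕ, ∫⁻ ω, {ω' | k + 1 ≤ N ω'}.indicator (fun _ => (1 : ENNReal)) ω ∂μ
        = (1 / 2 : ENNReal) ^ (k + 1) := by
      intro k
      rw [lintegral_indicator (hlevmeas k)]
      simp [hlevmu k]
      simpa using hlevmu k
    simp_rw [this]
    have hsum : ∑' k : ℕ, (1 / 2 : ENNReal) ^ (k + 1) = 1 := by
      simp_rw [pow_succ]
      rw [ENNReal.tsum_mul_right, ENNReal.tsum_geometric]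
      rw [one_div, ENNReal.one_sub_inv_two, inv_inv]
      exact ENNReal.mul_inv_cancel (by norm_num) (by norm_num)
    rw [hsum, lintegral_one]
    simp only [measure_univ]
    exact one_add_one_eq_two
  simp_rw [hcast]
  rw [hlin]
  rfl
end
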